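/- Let R be a commutative Noetherian local ring and let B and C be semidualizing R-modules. Then for every prime ideal p of R such that the localization R_p is Cohen–Macaulay (for example, every minimal prime of R), the localized module (Hom_R(B,C))_p is nonzero; in particular, Hom_R(B,C) ≠ 0. -/

import Mathlib

open CategoryTheory TensorProduct

universe u

/-- `Ext_R^n(M, N) = 0`. -/
def ExtVanish (R : Type u) [CommRing R] (M N : Type u) [AddCommGroup M] [Module R M]
    [AddCommGroup N] [Module R N] (n : ℕ) : Prop :=
  Subsingleton (((Ext R (ModuleCat.{u} R) n).obj (Opposite.op (ModuleCat.of R M))).obj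
    (ModuleCat.of R N))

/-- `Tor^R_n(M, N) = 0`. -/
def TorVanish (R : Type u) [CommRing R] (M N : Type u) [AddCommGroup M] [Module R M]
    [AddCommGroup N] [Module R N] (n : ℕ) : Prop :=
  Subsingleton (((Tor (ModuleCat.{u} R) n).obj (ModuleCat.of R M)).obj (ModuleCat.of R N))

/-- A semidualizing `R`-module: finitely generated, the homothety map
`R → Hom_R(C,C)` is bijective, and `Ext_R^n(C,C) = 0` for all `n ≥ 1`. -/
def IsSemidualizing (R : Type u) [CommRing R] (C : Type u) [AddCommGroup C] [Module R C] :
    Prop :=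
  Module.Finite R C ∧ Function.Bijective (LinearMap.lsmul R C) ∧
    ∀ n : ℕ, 1 ≤ n → ExtVanish R C C n

/-- The biduality map `X → Hom_R(Hom_R(X,C),C)`, `x ↦ (f ↦ f x)`. -/
noncomputable def bidualityMap (R : Type u) [CommRing R] (C X : Type u) [AddCommGroup C]
    [Module R C] [AddCommGroup X] [Module R X] : X →ₗ[R] ((X →ₗ[R] C) →ₗ[R] C) :=
  (LinearMap.id : (X →ₗ[R] C) →ₗ[R] (X →ₗ[R] C)).flip

/-- `X` is totally `C`-reflexive. -/
def IsTotallyReflexive (R : Type u) [CommRing R] (C X : Type u) [AddCommGroup C] [Module R C]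
    [AddCommGroup X] [Module R X] : Prop :=
  (∀ n : ℕ, 1 ≤ n → ExtVanish R X C n) ∧
  (∀ n : ℕ, 1 ≤ n → ExtVanish R (X →ₗ[R] C) C n) ∧
  Function.Bijective (bidualityMap R C X)

/-- `X` belongs to the Bass class `B_B(R)`. -/
def MemBassClass (R : Type u) [CommRing R] (B X : Type u) [AddCommGroup B] [Module R B]
    [AddCommGroup X] [Module R X] : Prop :=
  (∀ n : ℕ, 1 ≤ n → ExtVanish R B X n) ∧
  (∀ n : ℕ, 1 ≤ n → TorVanish R B (B →ₗ[R] X) n) ∧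
  Function.Bijective
    (TensorProduct.lift ((LinearMap.id : (B →ₗ[R] X) →ₗ[R] (B →ₗ[R] X)).flip) :
      B ⊗[R] (B →ₗ[R] X) →ₗ[R] X)

/-- `X` belongs to the Auslander class `A_C(R)`. -/
def MemAuslanderClass (R : Type u) [CommRing R] (C X : Type u) [AddCommGroup C] [Module R C]
    [AddCommGroup X] [Module R X] : Prop :=
  (∀ n : ℕ, 1 ≤ n → TorVanish R C X n) ∧
  (∀ n : ℕ, 1 ≤ n → ExtVanish R C (C ⊗[R] X) n) ∧
  Function.Bijective ((TensorProduct.mk R C X).flip : X →ₗ[R] (C →ₗ[R] C ⊗[R] X))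

/-- `M` has finite projective dimension over `R`: for some `n`, `Ext_R^i(M,-)` vanishes
for all `i > n`. -/
def HasFinProjDim (R : Type u) [CommRing R] (M : Type u) [AddCommGroup M] [Module R M] :
    Prop :=
  ∃ n : ℕ, ∀ (N : Type u) [AddCommGroup N] [Module R N], ∀ i : ℕ, n < i → ExtVanish R M N i

/-- `M` has finite injective dimension over `R`: for some `n`, `Ext_R^i(-,M)` vanishes
for all `i > n`. -/
def HasFinInjDim (R : Type u) [CommRing R] (M : Type u) [AddCommGroup M] [Module R M] :
    Prop :=
  ∃ n : ℕ, ∀ (N : Type u) [AddCommGroup N] [Module R N], ∀ i : ℕ, n < i → ExtVanish R N M i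

/-- A dualizing `R`-module: semidualizing of finite injective dimension. -/
def IsDualizingModule (R : Type u) [CommRing R] (D : Type u) [AddCommGroup D] [Module R D] :
    Prop :=
  IsSemidualizing R D ∧ HasFinInjDim R D

/-- An invertible `R`-module: finitely generated projective, locally free of rank one. -/
def IsInvertibleModule (R : Type u) [CommRing R] (P : Type u) [AddCommGroup P] [Module R P] :
    Prop :=
  Module.Finite R P ∧ Module.Projective R P ∧
    ∀ (m : Ideal R) (hm : m.IsMaximal),
      haveI := hm.isPrime
      Nonempty ((LocalizedModule m.primeCompl P) ≃ₗ[Localization m.primeCompl]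
        (Localization m.primeCompl))

/-- There is a quasi-deformation `R → R' ← Q` such that `R' ⊗_R M` has finite projective
dimension over `Q`. -/
def ExistsQuasiDefProjDim (R : Type u) [CommRing R] [IsLocalRing R]
    (M : Type u) [AddCommGroup M] [Module R M] : Prop :=
  ∃ (R' : Type u) (Q : Type u) (cR' : CommRing R') (cQ : CommRing Q),
    letI := cR'
    letI := cQ
    ∃ (_ : IsLocalRing R') (_ : IsLocalRing Q) (_ : IsNoetherianRing R')
      (_ : IsNoetherianRing Q) (φ : R →+* R') (ρ : Q →+* R'),
      IsLocalHom φ ∧ IsLocalHom ρ ∧ φ.Flat ∧ Function.Surjective ρ ∧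
      (∃ rs : List Q, RingTheory.Sequence.IsRegular Q rs ∧
        RingHom.ker ρ = Ideal.span {a | a ∈ rs}) ∧
      (letI := φ.toAlgebra
       letI : Module Q (R' ⊗[R] M) := Module.compHom (R' ⊗[R] M) ρ
       HasFinProjDim Q (R' ⊗[R] M))

/-- There is a quasi-deformation `R → R' ← Q` such that `R' ⊗_R M` has finite injective
dimension over `Q`. -/
def ExistsQuasiDefInjDim (R : Type u) [CommRing R] [IsLocalRing R]
    (M : Type u) [AddCommGroup M] [Module R M] : Prop :=
  ∃ (R' : Type u) (Q : Type u) (cR' : CommRing R') (cQ : CommRing Q),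
    letI := cR'
    letI := cQ
    ∃ (_ : IsLocalRing R') (_ : IsLocalRing Q) (_ : IsNoetherianRing R')
      (_ : IsNoetherianRing Q) (φ : R →+* R') (ρ : Q →+* R'),
      IsLocalHom φ ∧ IsLocalHom ρ ∧ φ.Flat ∧ Function.Surjective ρ ∧
      (∃ rs : List Q, RingTheory.Sequence.IsRegular Q rs ∧
        RingHom.ker ρ = Ideal.span {a | a ∈ rs}) ∧
      (letI := φ.toAlgebra
       letI : Module Q (R' ⊗[R] M) := Module.compHom (R' ⊗[R] M) ρ
       HasFinInjDim Q (R' ⊗[R] M))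

/-- `E` is an injective hull (injective envelope) of `M` over `R`: `E` is injective and
contains a copy of `M` as an essential submodule. -/
def IsInjectiveHull (R : Type u) [CommRing R] (M E : Type u) [AddCommGroup M] [Module R M]
    [AddCommGroup E] [Module R E] : Prop :=
  Module.Injective R E ∧ ∃ f : M →ₗ[R] E, Function.Injective f ∧
    ∀ N : Submodule R E, N ≠ ⊥ → N ⊓ LinearMap.range f ≠ ⊥

/-- There is an invertible `R`-module `P` with `B ≅ P ⊗_R C`. -/
def ExistsInvertibleFactor (R : Type u) [CommRing R] (B C : Type u) [AddCommGroup B]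
    [Module R B] [AddCommGroup C] [Module R C] : Prop :=
  ∃ (P : Type u) (aP : AddCommGroup P),
    letI := aP
    ∃ (mP : Module R P),
      letI := mP
      IsInvertibleModule R P ∧ Nonempty (B ≃ₗ[R] P ⊗[R] C)

/-- The depth of a local ring `A`: the least `n` such that `Ext_A^n(k, A) ≠ 0`,
where `k` is the residue field. -/
noncomputable def localRingDepth (A : Type u) [CommRing A] [IsLocalRing A] : ℕ∞ :=
  sInf {n : ℕ∞ | ∃ m : ℕ, n = m ∧ ¬ ExtVanish A (IsLocalRing.ResidueField A) A m}

/-- A Noetherian local ring is Cohen–Macaulay if its depth equals its Krull dimension. -/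
def IsCohenMacaulayLocalRing (A : Type u) [CommRing A] [IsLocalRing A] : Prop :=
  ringKrullDim A = (localRingDepth A : WithBot ℕ∞)

/-- A Noetherian local ring is Gorenstein if it has finite injective dimension as a module
over itself. -/
def IsGorensteinLocalRing (A : Type u) [CommRing A] [IsLocalRing A] : Prop :=
  HasFinInjDim A A

section Auxiliary

variable {A : Type u} [CommRing A]

lemma aux_annihilator_eq_bot {M : Type u} [AddCommGroup M] [Module A M]
    (h : Function.Injective (LinearMap.lsmul A M)) :
    Module.annihilator A M = ⊥ := by
  rw [eq_bot_iff]
  intro r hr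
  rw [Module.mem_annihilator] at hr
  rw [Ideal.mem_bot]
  apply h
  ext m
  simpa using hr m

lemma aux_exists_smul_eq_zero {M : Type u} [AddCommGroup M] [Module A M]
    [Module.Finite A M] (S : Submonoid A) (a : A)
    (h : ∀ m : M, ∃ r ∈ S, r • a • m = 0) :
    ∃ r ∈ S, ∀ m : M, r • a • m = 0 := by
  obtain ⟨s, hs⟩ := Module.Finite.fg_top (R := A) (M := M)
  choose c hc hc0 using h
  refine ⟨∏ x ∈ s, c x, Submonoid.prod_mem S (fun x _ => hc x), ?_⟩
  intro m
  have hm : m ∈ Submodule.span A (s : Set M) := by rw [hs]; trivial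
  induction hm using Submodule.span_induction with
  | mem x hx =>
      obtain ⟨t, ht⟩ := Finset.dvd_prod_of_mem c hx
      rw [ht, mul_comm, mul_smul, hc0, smul_zero]
  | zero => simp
  | add x y _ _ hx hy => rw [smul_add, smul_add, hx, hy, add_zero]
  | smul b x _ hx => rw [smul_comm a b, smul_comm _ b, hx, smul_zero]

lemma aux_nontrivial_localizedModule {M : Type u} [AddCommGroup M] [Module A M]
    [Module.Finite A M] (hM : Module.annihilator A M = ⊥) (q : Ideal A) [q.IsPrime] :
    Nontrivial (LocalizedModule q.primeCompl M) := by
  rw [← not_subsingleton_iff_nontrivial]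
  intro h
  rw [LocalizedModule.subsingleton_iff] at h
  obtain ⟨r, hrS, hr⟩ := aux_exists_smul_eq_zero q.primeCompl (1 : A)
    (fun m => by simpa using h m)
  have hr' : r ∈ Module.annihilator A M := by
    rw [Module.mem_annihilator]
    intro m
    simpa using hr m
  rw [hM, Ideal.mem_bot] at hr'
  exact hrS (hr' ▸ q.zero_mem)

lemma aux_annihilator_localizedModule {M : Type u} [AddCommGroup M] [Module A M]
    [Module.Finite A M] (hM : Module.annihilator A M = ⊥) (S : Submonoid A) :
    Module.annihilator (Localization S) (LocalizedModule S M) = ⊥ := by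
  rw [eq_bot_iff]
  intro z hz
  rw [Module.mem_annihilator] at hz
  obtain ⟨⟨a, s⟩, hzs⟩ := IsLocalization.surj S z
  have h1 : ∀ m : M, ∃ r ∈ S, r • a • m = 0 := by
    intro m
    have h2 : a • LocalizedModule.mk m (1 : S) = 0 := by
      rw [← algebraMap_smul (Localization S) a, ← hzs, mul_comm, mul_smul, hz, smul_zero]
    have h3 : (a • m) ∈ LinearMap.ker (LocalizedModule.mkLinearMap S M) := by
      rw [LinearMap.mem_ker, LocalizedModule.mkLinearMap_apply, ← LocalizedModule.smul'_mk]
      exact h2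
    exact LocalizedModule.mem_ker_mkLinearMap_iff.mp h3
  obtain ⟨r, hrS, hr⟩ := aux_exists_smul_eq_zero S a h1
  have hra : r * a ∈ Module.annihilator A M := by
    rw [Module.mem_annihilator]
    intro m
    rw [mul_smul]
    exact hr m
  rw [hM, Ideal.mem_bot] at hra
  rw [Ideal.mem_bot]
  have hu1 : IsUnit (algebraMap A (Localization S) r) :=
    IsLocalization.map_units (Localization S) ⟨r, hrS⟩
  have hu2 : IsUnit (algebraMap A (Localization S) (s : A)) :=
    IsLocalization.map_units (Localization S) s
  have ha : algebraMap A (Localization S) a = 0 := by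
    have h3 : algebraMap A (Localization S) r * algebraMap A (Localization S) a = 0 := by
      rw [← map_mul, hra, map_zero]
    have h4 := congrArg (fun w => (↑hu1.unit⁻¹ : Localization S) * w) h3
    simpa [← mul_assoc, IsUnit.val_inv_mul] using h4
  have h5 : z * algebraMap A (Localization S) (s : A) = 0 := by rw [hzs, ha]
  have h6 := congrArg (fun w => w * (↑hu2.unit⁻¹ : Localization S)) h5
  simpa [mul_assoc, IsUnit.mul_val_inv] using h6

lemma aux_key (A : Type u) [CommRing A] [IsLocalRing A] (M N : Type u) [AddCommGroup M]
    [Module A M] [AddCommGroup N] [Module A N] [Module.Finite A M] [Nontrivial M]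
    (x : N) (hx : (Submodule.span A {x}).annihilator = IsLocalRing.maximalIdeal A) :
    Nontrivial (M →ₗ[A] N) := by
  obtain ⟨m, hm⟩ : ∃ I : Ideal A, I = IsLocalRing.maximalIdeal A := ⟨_, rfl⟩
  rw [← hm] at hx
  haveI : m.IsMaximal := hm ▸ IsLocalRing.maximalIdeal.isMaximal A
  letI : Field (A ⧸ m) := Ideal.Quotient.field m
  -- `M ⧸ mM` is nontrivial by Nakayama
  have hann : Module.annihilator A M ≠ ⊤ := by
    intro h
    obtain ⟨z, hz⟩ := exists_ne (0 : M)
    apply hz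
    have h1 : (1 : A) ∈ Module.annihilator A M := by rw [h]; trivial
    rw [Module.mem_annihilator] at h1
    simpa using h1 z
  have hlt : (m • ⊤ : Submodule A M) < ⊤ := by
    refine lt_top_iff_ne_top.mpr ?_
    intro h
    refine Submodule.top_ne_ideal_smul_of_le_jacobson_annihilator (I := m) ?_ h.symm
    rw [hm]
    exact le_of_eq (IsLocalRing.jacobson_eq_maximalIdeal _ hann).symm
  haveI hVnt : Nontrivial (M ⧸ (m • ⊤ : Submodule A M)) :=
    Submodule.Quotient.nontrivial_iff.mpr hlt.ne
  obtain ⟨v, hv⟩ := exists_ne (0 : M ⧸ (m • ⊤ : Submodule A M))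
  have hf : ¬ ∀ φ : Module.Dual (A ⧸ m) (M ⧸ (m • ⊤ : Submodule A M)), φ v = 0 := by
    rw [Module.forall_dual_apply_eq_zero_iff]
    exact hv
  push_neg at hf
  obtain ⟨f, hfv⟩ := hf
  have hAsmul : ∀ (a : A) (c : A ⧸ m), a • c = Ideal.Quotient.mk m a * c := by
    intro a c
    obtain ⟨b, rfl⟩ := Ideal.Quotient.mk_surjective c
    rw [← map_mul]
    first
    | rfl
    | rw [Algebra.smul_def, Ideal.Quotient.algebraMap_eq]
  -- the `A`-linear functional `M → A ⧸ m`
  set ψ : M →ₗ[A] (A ⧸ m) :=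
    { toFun := fun z => f (Submodule.Quotient.mk z)
      map_add' := fun y z => by
        show f (Submodule.Quotient.mk (y + z))
          = f (Submodule.Quotient.mk y) + f (Submodule.Quotient.mk z)
        rw [Submodule.Quotient.mk_add, map_add]
      map_smul' := fun a z => by
        show f (Submodule.Quotient.mk (a • z)) = a • f (Submodule.Quotient.mk z)
        rw [show (Submodule.Quotient.mk (a • z) : M ⧸ (m • ⊤ : Submodule A M))
            = Ideal.Quotient.mk m a • Submodule.Quotient.mk z from
            (Module.Quotient.mk_smul_mk (I := m) (M := M) a z).symm,
          map_smul, smul_eq_mul, hAsmul] } with hψ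
  -- the injection `A ⧸ m → N`
  set g : A →ₗ[A] N := LinearMap.toSpanSingleton A N x with hg
  have hker : LinearMap.ker g = m := by
    ext a
    rw [LinearMap.mem_ker, ← hx, Submodule.mem_annihilator_span_singleton]
    rfl
  set gbar : (A ⧸ m) →ₗ[A] N :=
    Submodule.liftQ (m : Submodule A A) g (le_of_eq hker.symm) with hgb
  have hgbar : LinearMap.ker gbar = ⊥ := Submodule.ker_liftQ_eq_bot _ _ _ (le_of_eq hker)
  -- assemble
  set φ : M →ₗ[A] N := gbar ∘ₗ ψ with hφ
  obtain ⟨z, hz⟩ := Submodule.Quotient.mk_surjective (m • ⊤ : Submodule A M) v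
  have hφz : φ z = gbar (f v) := by
    simp only [hφ, LinearMap.comp_apply, hψ, LinearMap.coe_mk, AddHom.coe_mk, hz]
  have hzne : φ z ≠ 0 := by
    rw [hφz]
    intro h0
    have h1 : f v ∈ LinearMap.ker gbar := h0
    rw [hgbar, Submodule.mem_bot] at h1
    exact hfv h1
  refine nontrivial_of_ne φ 0 ?_
  intro h
  rw [h] at hzne
  simp at hzne

lemma aux_main (A : Type u) [CommRing A] [IsNoetherianRing A] (M N : Type u)
    [AddCommGroup M] [Module A M] [AddCommGroup N] [Module A N]
    [Module.Finite A M] [Module.Finite A N] [Nontrivial N]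
    (hM : Module.annihilator A M = ⊥) :
    Nontrivial (M →ₗ[A] N) := by
  obtain ⟨q, hq⟩ := associatedPrimes.nonempty A N
  obtain ⟨hqp, x, hqx⟩ := isAssociatedPrime_iff.mp hq
  replace hqx : q = (Submodule.span A {x}).annihilator := by
    rw [hqx]
    ext a
    rw [Submodule.mem_colon, Submodule.mem_annihilator_span_singleton]
    simp
  haveI := hqp
  set S := q.primeCompl with hS
  haveI : Nontrivial (LocalizedModule S M) := aux_nontrivial_localizedModule hM q
  haveI : Module.Finite (Localization S) (LocalizedModule S M) :=
    Module.Finite.of_isLocalizedModule S (LocalizedModule.mkLinearMap S M)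
  have hx' : (Submodule.span (Localization S)
        {LocalizedModule.mk x (1 : S)}).annihilator
      = IsLocalRing.maximalIdeal (Localization S) := by
    rw [← Localization.AtPrime.map_eq_maximalIdeal (I := q)]
    ext z
    rw [Submodule.mem_annihilator_span_singleton]
    constructor
    · intro hzx
      obtain ⟨⟨a, s⟩, hzs⟩ := IsLocalization.surj S z
      have ha : a • LocalizedModule.mk x (1 : S) = 0 := by
        rw [← algebraMap_smul (Localization S) a, ← hzs, mul_comm, mul_smul, hzx, smul_zero]
      have ha' : (a • x) ∈ LinearMap.ker (LocalizedModule.mkLinearMap S N) := by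
        rw [LinearMap.mem_ker, LocalizedModule.mkLinearMap_apply, ← LocalizedModule.smul'_mk]
        exact ha
      obtain ⟨r, hrS, hr⟩ := LocalizedModule.mem_ker_mkLinearMap_iff.mp ha'
      have hra : r * a ∈ q := by
        rw [hqx, Submodule.mem_annihilator_span_singleton, mul_smul]
        exact hr
      have haq : a ∈ q := (Ideal.IsPrime.mem_or_mem hqp hra).resolve_left hrS
      have hu : IsUnit (algebraMap A (Localization S) (s : A)) :=
        IsLocalization.map_units (Localization S) s
      have hz' : z = algebraMap A (Localization S) a * ↑hu.unit⁻¹ := by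
        rw [← hzs, mul_assoc, IsUnit.mul_val_inv, mul_one]
      rw [hz']
      exact Ideal.mul_mem_right _ _ (Ideal.mem_map_of_mem _ haq)
    · intro hz
      obtain ⟨⟨r, s⟩, hrs⟩ := (IsLocalization.mem_map_algebraMap_iff S (Localization S)).mp hz
      have hrx : (r : A) • x = 0 := by
        have hrq : (r : A) ∈ (Submodule.span A {x}).annihilator := by
          rw [← hqx]
          exact r.2
        exact (Submodule.mem_annihilator_span_singleton x (r : A)).mp hrq
      have h0 : algebraMap A (Localization S) (s : A)
          • (z • LocalizedModule.mk x (1 : S)) = 0 := by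
        rw [← mul_smul, mul_comm, hrs, algebraMap_smul, LocalizedModule.smul'_mk, hrx,
          LocalizedModule.zero_mk]
      have hu : IsUnit (algebraMap A (Localization S) (s : A)) :=
        IsLocalization.map_units (Localization S) s
      exact (hu.smul_eq_zero).mp h0
  haveI hnt : Nontrivial
      ((LocalizedModule S M) →ₗ[Localization S] (LocalizedModule S N)) :=
    aux_key (Localization S) (LocalizedModule S M) (LocalizedModule S N)
      (LocalizedModule.mk x (1 : S)) hx'
  -- transfer back
  haveI : Module.FinitePresentation A M := Module.finitePresentation_of_finite A M
  rw [← not_subsingleton_iff_nontrivial]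
  intro hsub
  haveI : Subsingleton (LocalizedModule S (M →ₗ[A] N)) := by
    rw [LocalizedModule.subsingleton_iff]
    intro f
    exact ⟨1, one_mem _, by rw [Subsingleton.elim f 0, smul_zero]⟩
  have e := IsLocalizedModule.iso S (LocalizedModule.map S (M := M) (N := N))
  haveI : Subsingleton
      ((LocalizedModule S M) →ₗ[Localization S] (LocalizedModule S N)) :=
    e.symm.toEquiv.subsingleton
  exact (not_subsingleton_iff_nontrivial.mpr hnt) ‹_›

end Auxiliary

/-- Proposition 7.2(a): Over a Noetherian local ring, for semidualizing
modules `B`, `C` and every prime `p` with `R_p` Cohen–Macaulay, `(Hom(B,C))_p ≠ 0`;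
in particular `Hom(B,C) ≠ 0`. -/
theorem statement15 (R : Type u) [CommRing R] [IsNoetherianRing R] [IsLocalRing R]
    (B C : Type u) [AddCommGroup B] [Module R B] [AddCommGroup C] [Module R C]
    (hB : IsSemidualizing R B) (hC : IsSemidualizing R C) :
    (∀ (p : Ideal R) [p.IsPrime],
      IsCohenMacaulayLocalRing (Localization.AtPrime p) →
        Nontrivial (LocalizedModule p.primeCompl (B →ₗ[R] C))) ∧
    Nontrivial (B →ₗ[R] C) := by
  obtain ⟨hBfin, hBbij, -⟩ := hB
  obtain ⟨hCfin, hCbij, -⟩ := hC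
  haveI := hBfin
  haveI := hCfin
  have hBann : Module.annihilator R B = ⊥ := aux_annihilator_eq_bot hBbij.injective
  have hCann : Module.annihilator R C = ⊥ := aux_annihilator_eq_bot hCbij.injective
  haveI : Nontrivial C := by
    rw [← not_subsingleton_iff_nontrivial]
    intro h
    exact zero_ne_one (hCbij.injective (Subsingleton.elim _ _) : (0 : R) = 1)
  constructor
  · intro p hp _
    set S := p.primeCompl with hS
    haveI : IsNoetherianRing (Localization S) :=
      IsLocalization.isNoetherianRing S _ inferInstance
    haveI : Module.Finite (Localization S) (LocalizedModule S B) :=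
      Module.Finite.of_isLocalizedModule S (LocalizedModule.mkLinearMap S B)
    haveI : Module.Finite (Localization S) (LocalizedModule S C) :=
      Module.Finite.of_isLocalizedModule S (LocalizedModule.mkLinearMap S C)
    haveI : Nontrivial (LocalizedModule S C) := aux_nontrivial_localizedModule hCann p
    haveI hnt := aux_main (Localization S) (LocalizedModule S B) (LocalizedModule S C)
      (aux_annihilator_localizedModule hBann S)
    haveI : Module.FinitePresentation R B := Module.finitePresentation_of_finite R B
    have e := IsLocalizedModule.iso S (LocalizedModule.map S (M := B) (N := C))
    exact e.toEquiv.nontrivial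
  · exact aux_main R B C hBann
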